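/- Let Q(a) = {x ∈ ℝⁿ : ⟨xᵢ*, x⟩ ≤ αᵢ for i = 1..k, ⟨xᵢ*, x⟩ = αᵢ for i = k+1..m}, where a = (α₁,...,α_m). Given fixed vectors x₁*,...,x_m* ∈ ℝⁿ, there exists a constant K > 0, depending only on the xᵢ*, such that d(x, Q(a)) ≤ K ( Σ_{i=1}^{k} (⟨xᵢ*, x⟩ − αᵢ)⁺ + Σ_{i=k+1}^{m} |⟨xᵢ*, x⟩ − αᵢ| ) for all x ∈ ℝⁿ and all a ∈ ℝᵐ with Q(a) ≠ ∅. -/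

import Mathlib

open scoped RealInnerProductSpace

set_option linter.unusedSectionVars false
set_option maxHeartbeats 1000000

open Finset

/-- The polyhedral set `Q(a)` defined by the linear inequalities
`⟨cᵢ, x⟩ ≤ aᵢ` for `i < k` and equalities `⟨cᵢ, x⟩ = aᵢ` for `k ≤ i`. -/
def Qset (n m k : ℕ) (c : Fin m → EuclideanSpace ℝ (Fin n)) (a : Fin m → ℝ) :
    Set (EuclideanSpace ℝ (Fin n)) :=
  {x | (∀ i : Fin m, (i : ℕ) < k → ⟪c i, x⟫ ≤ a i) ∧
       (∀ i : Fin m, k ≤ (i : ℕ) → ⟪c i, x⟫ = a i)}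

open Finset

variable {H : Type*} [NormedAddCommGroup H] [InnerProductSpace ℝ H] [FiniteDimensional ℝ H]


open scoped RealInnerProductSpace
open Finset

variable {H : Type*} [NormedAddCommGroup H] [InnerProductSpace ℝ H] [FiniteDimensional ℝ H]

/-- Carathéodory for cones: a nonnegative combination can be rewritten using a
linearly independent subfamily. -/
lemma cone_caratheodory {ι : Type*} [DecidableEq ι] (w : ι → H) (t : Finset ι) :
    ∀ lam : ι → ℝ, (∀ i ∈ t, 0 ≤ lam i) →
    ∃ (s : Finset ι) (mu : ι → ℝ), s ⊆ t ∧
      LinearIndependent ℝ (fun i : s => w i) ∧ (∀ i ∈ s, 0 ≤ mu i) ∧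
      ∑ i ∈ s, mu i • w i = ∑ i ∈ t, lam i • w i := by
  classical
  induction t using Finset.strongInduction with
  | _ t ih =>
  intro lam hlam
  by_cases hli : LinearIndependent ℝ (fun i : t => w i)
  · exact ⟨t, lam, Finset.Subset.refl t, hli, hlam, rfl⟩
  · obtain ⟨g, hg0, ⟨i₁, hg₁⟩⟩ := Fintype.not_linearIndependent_iff.mp hli
    set gg : ι → ℝ := fun j => if h : j ∈ t then g ⟨j, h⟩ else 0 with hggdef
    have hggsum : ∑ j ∈ t, gg j • w j = 0 := by
      rw [← Finset.sum_coe_sort t (fun j => gg j • w j)]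
      rw [← hg0]
      exact Finset.sum_congr rfl (fun j _ => by simp [hggdef, j.2])
    have hmain : ∀ g2 : ι → ℝ, (∑ j ∈ t, g2 j • w j = 0) → (∃ i ∈ t, 0 < g2 i) →
        ∃ (s : Finset ι) (mu : ι → ℝ), s ⊆ t ∧
          LinearIndependent ℝ (fun i : s => w i) ∧ (∀ i ∈ s, 0 ≤ mu i) ∧
          ∑ i ∈ s, mu i • w i = ∑ i ∈ t, lam i • w i := by
      intro g2 hg2sum hg2pos
      set P : Finset ι := t.filter (fun j => 0 < g2 j) with hP
      have hPne : P.Nonempty := by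
        obtain ⟨i, hit, hip⟩ := hg2pos
        exact ⟨i, Finset.mem_filter.mpr ⟨hit, hip⟩⟩
      obtain ⟨i₀, hi₀P, hmin⟩ := P.exists_min_image (fun j => lam j / g2 j) hPne
      have hi₀t : i₀ ∈ t := (Finset.mem_filter.mp hi₀P).1
      have hi₀pos : 0 < g2 i₀ := (Finset.mem_filter.mp hi₀P).2
      set r : ℝ := lam i₀ / g2 i₀ with hr
      have hr0 : 0 ≤ r := div_nonneg (hlam _ hi₀t) hi₀pos.le
      set lam' : ι → ℝ := fun j => lam j - r * g2 j with hlam'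
      have h1 : ∀ j ∈ t, 0 ≤ lam' j := by
        intro j hjt
        rcases le_or_gt (g2 j) 0 with h | h
        · have : r * g2 j ≤ 0 := mul_nonpos_of_nonneg_of_nonpos hr0 h
          simp only [hlam']
          linarith [hlam j hjt]
        · have hjP : j ∈ P := Finset.mem_filter.mpr ⟨hjt, h⟩
          have := hmin j hjP
          have : r * g2 j ≤ lam j := by
            rw [hr]
            calc lam i₀ / g2 i₀ * g2 j ≤ lam j / g2 j * g2 j := by
                  apply mul_le_mul_of_nonneg_right (hmin j hjP) h.le
              _ = lam j := div_mul_cancel₀ _ h.ne'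
          simp only [hlam']; linarith
      have h2 : lam' i₀ = 0 := by
        simp only [hlam', hr]
        rw [div_mul_cancel₀ _ hi₀pos.ne']
        ring
      have hsum' : ∑ j ∈ t, lam' j • w j = ∑ j ∈ t, lam j • w j := by
        simp only [hlam', sub_smul, mul_smul]
        rw [Finset.sum_sub_distrib, ← Finset.smul_sum, hg2sum, smul_zero, sub_zero]
      obtain ⟨s, mu, hsub, hlin, hmu0, hmusum⟩ :=
        ih (t.erase i₀) (Finset.erase_ssubset hi₀t) lam'
          (fun j hj => h1 j (Finset.mem_of_mem_erase hj))
      refine ⟨s, mu, hsub.trans (Finset.erase_subset _ _), hlin, hmu0, ?_⟩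
      rw [hmusum, Finset.sum_erase _ (by rw [h2, zero_smul]), hsum']
    rcases (hg₁.lt_or_gt) with hneg | hpos
    · apply hmain (fun j => - gg j)
      · simp only [neg_smul, Finset.sum_neg_distrib, hggsum, neg_zero]
      · exact ⟨i₁, i₁.2, by simp only [hggdef, dif_pos i₁.2, neg_pos]; exact hneg⟩
    · apply hmain gg hggsum
      exact ⟨i₁, i₁.2, by simp only [hggdef, dif_pos i₁.2]; exact hpos⟩


/-- The linear map sending coefficients to the combination `∑ i ∈ s, mu i • w i`. -/
noncomputable def combMap {ι' : Type*} (w : ι' → H) (s : Finset ι') : ((↥s → ℝ) →ₗ[ℝ] H) where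
  toFun := fun mu => ∑ i : ↥s, mu i • w ↑i
  map_add' := fun mu nu => by simp [add_smul, Finset.sum_add_distrib]
  map_smul' := fun r mu => by simp [Finset.smul_sum, mul_smul]

lemma combMap_inj {ι' : Type*} (w : ι' → H) (s : Finset ι')
    (hs : LinearIndependent ℝ (fun i : s => w i)) :
    LinearMap.ker (combMap w s) = ⊥ := by
  rw [LinearMap.ker_eq_bot']
  intro mu hmu
  funext i
  exact Fintype.linearIndependent_iff.mp hs mu hmu i

lemma isClosed_partial_cone {ι' : Type*} (w : ι' → H) (s : Finset ι')
    (hs : LinearIndependent ℝ (fun i : s => w i)) :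
    IsClosed {v : H | ∃ lam : ι' → ℝ, (∀ i, 0 ≤ lam i) ∧ v = ∑ i ∈ s, lam i • w i} := by
  classical
  have hf := LinearMap.isClosedEmbedding_of_injective (combMap_inj w s hs)
  have horth : IsClosed {mu : ↥s → ℝ | ∀ i, 0 ≤ mu i} := by
    have : {mu : ↥s → ℝ | ∀ i, 0 ≤ mu i} = ⋂ i, {mu | 0 ≤ mu i} := by
      ext mu; simp [Set.mem_iInter]
    rw [this]
    exact isClosed_iInter fun i => isClosed_le continuous_const (continuous_apply i)
  have himg := hf.isClosedMap _ horth
  convert himg using 1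
  ext v
  constructor
  · rintro ⟨lam, h0, rfl⟩
    refine ⟨fun i => lam ↑i, fun i => h0 ↑i, ?_⟩
    show ∑ i : ↥s, lam ↑i • w ↑i = _
    rw [Finset.sum_coe_sort s (fun i => lam i • w i)]
  · rintro ⟨mu, hmu, rfl⟩
    refine ⟨fun j => if h : j ∈ s then mu ⟨j, h⟩ else 0, ?_, ?_⟩
    · intro i; by_cases h : i ∈ s <;> simp [h, hmu _]
    · rw [← Finset.sum_coe_sort s (fun j => (if h : j ∈ s then mu ⟨j, h⟩ else 0) • w j)]
      show (∑ i : ↥s, mu i • w ↑i) = _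
      exact Finset.sum_congr rfl (fun i _ => by simp [i.2])

/-- Farkas' lemma for finitely generated cones. -/
lemma farkas_cone {ι' : Type*} [Fintype ι'] (w : ι' → H) (v : H)
    (hv : ∀ d : H, (∀ i, 0 ≤ ⟪w i, d⟫) → 0 ≤ ⟪v, d⟫) :
    ∃ lam : ι' → ℝ, (∀ i, 0 ≤ lam i) ∧ v = ∑ i, lam i • w i := by
  classical
  haveI : CompleteSpace H := FiniteDimensional.complete ℝ H
  set C : Set H := {v | ∃ lam : ι' → ℝ, (∀ i, 0 ≤ lam i) ∧ v = ∑ i, lam i • w i} with hC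
  let K : ConvexCone ℝ H :=
  { carrier := C
    smul_mem' := by
      intro r hr x hx
      obtain ⟨lam, h0, rfl⟩ := hx
      exact ⟨fun i => r * lam i, fun i => mul_nonneg hr.le (h0 i), by
        rw [Finset.smul_sum]; exact Finset.sum_congr rfl fun i _ => (mul_smul _ _ _).symm⟩
    add_mem' := by
      intro x hx y hy
      obtain ⟨lam, h0, rfl⟩ := hx
      obtain ⟨nu, h0', rfl⟩ := hy
      exact ⟨fun i => lam i + nu i, fun i => add_nonneg (h0 i) (h0' i), by
        rw [← Finset.sum_add_distrib]; exact Finset.sum_congr rfl fun i _ => (add_smul _ _ _).symm⟩ }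
  have hne : (K : Set H).Nonempty := ⟨0, ⟨fun _ => 0, fun i => le_refl 0, by simp⟩⟩
  have hclosed : IsClosed (K : Set H) := by
    have hCeq : C = ⋃ s ∈ {s : Finset ι' | LinearIndependent ℝ (fun i : s => w i)},
        {v : H | ∃ lam : ι' → ℝ, (∀ i, 0 ≤ lam i) ∧ v = ∑ i ∈ s, lam i • w i} := by
      ext u
      simp only [Set.mem_iUnion, Set.mem_setOf_eq]
      constructor
      · rintro ⟨lam, h0, rfl⟩
        obtain ⟨s, mu, _, hlin, hmu0, hsum⟩ :=
          cone_caratheodory w Finset.univ lam (fun i _ => h0 i)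
        refine ⟨s, hlin, fun j => if j ∈ s then mu j else 0, ?_, ?_⟩
        · intro i; by_cases h : i ∈ s <;> simp [h, hmu0, hmu0 _]
        · rw [← hsum]
          exact (Finset.sum_congr rfl (fun j hj => by simp [hj])).symm
      · rintro ⟨s, hs, lam, h0, rfl⟩
        refine ⟨fun j => if j ∈ s then lam j else 0, ?_, ?_⟩
        · intro i; by_cases h : i ∈ s <;> simp [h, h0 _]
        · calc ∑ i ∈ s, lam i • w i
              = ∑ i ∈ s, (if i ∈ s then lam i else 0) • w i :=
                Finset.sum_congr rfl (fun j hj => by simp [hj])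
            _ = ∑ i, (if i ∈ s then lam i else 0) • w i :=
                Finset.sum_subset (Finset.subset_univ s) (fun j _ hj => by simp [hj])
    show IsClosed C
    rw [hCeq]
    exact Set.Finite.isClosed_biUnion (Set.toFinite _)
      (fun s hs => isClosed_partial_cone w s hs)
  by_contra hvC
  have hvK : v ∉ (K : Set H) := hvC
  obtain ⟨f, u, hfu, hux⟩ := geometric_hahn_banach_closed_point K.convex hclosed hvK
  have hu : 0 < u := by
    have := hfu 0 ⟨fun _ => 0, fun i => le_refl 0, by simp⟩
    simpa using this
  have hwi : ∀ i, f (w i) ≤ 0 := by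
    intro i
    by_contra hpos
    push_neg at hpos
    have hmem : (u / f (w i)) • w i ∈ (K : Set H) :=
      ⟨fun j => if j = i then u / f (w i) else 0,
        fun j => by by_cases h : j = i <;> simp [h, (div_pos hu hpos).le], by simp [ite_smul]⟩
    have := hfu _ hmem
    rw [map_smul, smul_eq_mul, div_mul_cancel₀ _ hpos.ne'] at this
    exact lt_irrefl _ this
  have := hv (-(InnerProductSpace.toDual ℝ H).symm f) (fun i => by
    rw [inner_neg_right, real_inner_comm, InnerProductSpace.toDual_symm_apply]
    linarith [hwi i])
  rw [inner_neg_right, real_inner_comm, InnerProductSpace.toDual_symm_apply] at this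
  linarith

lemma coeff_bound {ι' : Type*} (w : ι' → H) (s : Finset ι')
    (hs : LinearIndependent ℝ (fun i : s => w i)) :
    ∃ C : ℝ, ∀ lam : ι' → ℝ, ∀ i ∈ s, |lam i| ≤ C * ‖∑ j ∈ s, lam j • w j‖ := by
  classical
  set f := combMap w s with hf
  have hinj : Function.Injective f := LinearMap.ker_eq_bot.mp (combMap_inj w s hs)
  set e := LinearEquiv.ofInjective f hinj with he
  set g := LinearMap.toContinuousLinearMap (e.symm : ↥(LinearMap.range f) →ₗ[ℝ] (↥s → ℝ)) with hg
  refine ⟨‖g‖, ?_⟩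
  intro lam i hi
  set mu : ↥s → ℝ := fun j => lam ↑j with hmu
  have hvsum : ∑ j ∈ s, lam j • w j = f mu := by
    show _ = ∑ i : ↥s, mu i • w ↑i
    rw [Finset.sum_coe_sort s (fun j => lam j • w j)]
  have hmug : mu = g ⟨f mu, LinearMap.mem_range_self f mu⟩ := by
    have h1 : e mu = ⟨f mu, LinearMap.mem_range_self f mu⟩ := by
      apply Subtype.ext
      rfl
    have := e.symm_apply_apply mu
    rw [h1] at this
    exact this.symm
  have hb : ‖mu‖ ≤ ‖g‖ * ‖f mu‖ := by
    calc ‖mu‖ = ‖g ⟨f mu, LinearMap.mem_range_self f mu⟩‖ := by rw [← hmug]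
    _ ≤ ‖g‖ * ‖(⟨f mu, LinearMap.mem_range_self f mu⟩ : ↥(LinearMap.range f))‖ :=
        g.le_opNorm _
    _ = ‖g‖ * ‖f mu‖ := rfl
  have h1 : |lam i| = ‖mu ⟨i, hi⟩‖ := by simp [hmu]
  rw [h1, hvsum]
  exact le_trans (norm_le_pi_norm mu ⟨i, hi⟩) hb

lemma coeff_bound_uniform {ι' : Type*} [Fintype ι'] (w : ι' → H) :
    ∃ K : ℝ, 0 < K ∧ ∀ s : Finset ι', LinearIndependent ℝ (fun i : s => w i) →
      ∀ lam : ι' → ℝ, ∀ i ∈ s, |lam i| ≤ K * ‖∑ j ∈ s, lam j • w j‖ := by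
  classical
  have hCex : ∀ s : Finset ι', ∃ C : ℝ, LinearIndependent ℝ (fun i : s => w i) →
      ∀ lam : ι' → ℝ, ∀ i ∈ s, |lam i| ≤ C * ‖∑ j ∈ s, lam j • w j‖ := by
    intro s
    by_cases h : LinearIndependent ℝ (fun i : s => w i)
    · obtain ⟨C, hC⟩ := coeff_bound w s h
      exact ⟨C, fun _ => hC⟩
    · exact ⟨0, fun h' => absurd h' h⟩
  choose C hC using hCex
  refine ⟨1 + ∑ s : Finset ι', max (C s) 0, ?_, ?_⟩
  · have : (0:ℝ) ≤ ∑ s : Finset ι', max (C s) 0 :=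
      Finset.sum_nonneg fun s _ => le_max_right _ _
    linarith
  · intro s hs lam i hi
    have h1 := hC s hs lam i hi
    have h2 : C s ≤ 1 + ∑ s : Finset ι', max (C s) 0 := by
      have h3 : max (C s) 0 ≤ ∑ s : Finset ι', max (C s) 0 :=
        Finset.single_le_sum (fun u _ => le_max_right (C u) 0) (Finset.mem_univ s)
      have := le_max_left (C s) 0
      linarith
    exact h1.trans (mul_le_mul_of_nonneg_right h2 (norm_nonneg _))


lemma hoffman_key {ι' : Type*} [Fintype ι'] [DecidableEq ι'] (w : ι' → H) :
    ∃ K : ℝ, 0 < K ∧ ∀ (t : Finset ι') (v : H),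
      (∀ d : H, (∀ i ∈ t, 0 ≤ ⟪w i, d⟫) → 0 ≤ ⟪v, d⟫) →
      ∃ (s : Finset ι') (lam : ι' → ℝ), s ⊆ t ∧ (∀ i ∈ s, 0 ≤ lam i) ∧
        (∀ i ∈ s, lam i ≤ K * ‖v‖) ∧ v = ∑ i ∈ s, lam i • w i := by
  classical
  obtain ⟨K, hK, hbound⟩ := coeff_bound_uniform w
  refine ⟨K, hK, ?_⟩
  intro t v hv
  obtain ⟨lam', h0', hsum'⟩ := farkas_cone (fun i : ↥t => w ↑i) v
    (fun d hd => hv d (fun i hi => hd ⟨i, hi⟩))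
  set lamext : ι' → ℝ := fun j => if h : j ∈ t then lam' ⟨j, h⟩ else 0 with hlamext
  have h0ext : ∀ i ∈ t, 0 ≤ lamext i := fun i hi => by
    simp only [hlamext, dif_pos hi]; exact h0' _
  have hvsum : v = ∑ j ∈ t, lamext j • w j := by
    rw [hsum', ← Finset.sum_coe_sort t (fun j => lamext j • w j)]
    exact Finset.sum_congr rfl fun j _ => by simp [hlamext, j.2]
  obtain ⟨s, mu, hsub, hlin, hmu0, hmusum⟩ := cone_caratheodory w t lamext h0ext
  have hveq : v = ∑ i ∈ s, mu i • w i := by rw [hvsum, ← hmusum]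
  refine ⟨s, mu, hsub, hmu0, ?_, hveq⟩
  intro i hi
  calc mu i ≤ |mu i| := le_abs_self _
    _ ≤ K * ‖∑ j ∈ s, mu j • w j‖ := hbound s hlin mu i hi
    _ = K * ‖v‖ := by rw [← hveq]


/-- Hoffmann's error bound: given fixed vectors `cᵢ ∈ ℝⁿ`, there is `K > 0`,
depending only on the `cᵢ`, such that
`d(x, Q(a)) ≤ K (Σ_{i<k} (⟨cᵢ,x⟩ − aᵢ)⁺ + Σ_{k≤i} |⟨cᵢ,x⟩ − aᵢ|)`
for all `x` and all `a` with `Q(a) ≠ ∅`. -/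
theorem hoffmann_error_bound (n m k : ℕ) (hk : k ≤ m)
    (c : Fin m → EuclideanSpace ℝ (Fin n)) :
    ∃ K : ℝ, 0 < K ∧ ∀ a : Fin m → ℝ, (Qset n m k c a).Nonempty →
      ∀ x : EuclideanSpace ℝ (Fin n),
        Metric.infDist x (Qset n m k c a) ≤
          K * ((∑ i ∈ Finset.univ.filter (fun i : Fin m => (i : ℕ) < k),
                  max (⟪c i, x⟫ - a i) 0) +
               (∑ i ∈ Finset.univ.filter (fun i : Fin m => k ≤ (i : ℕ)),
                  |⟪c i, x⟫ - a i|)) := by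
  classical
  set w : (Fin m ⊕ Fin m) → EuclideanSpace ℝ (Fin n) := Sum.elim c (fun i => -c i) with hw
  obtain ⟨K, hK, hkey⟩ := hoffman_key w
  refine ⟨2 * K, by linarith, ?_⟩
  intro a hQne x
  set Q := Qset n m k c a with hQdef
  set S1 := ∑ i ∈ Finset.univ.filter (fun i : Fin m => (i : ℕ) < k),
      max (⟪c i, x⟫ - a i) 0 with hS1def
  set S2 := ∑ i ∈ Finset.univ.filter (fun i : Fin m => k ≤ (i : ℕ)),
      |⟪c i, x⟫ - a i| with hS2def
  have hS1 : 0 ≤ S1 := Finset.sum_nonneg fun i _ => le_max_right _ _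
  have hS2 : 0 ≤ S2 := Finset.sum_nonneg fun i _ => abs_nonneg _
  have hconv : Convex ℝ Q := by
    intro u hu v' hv' α β hα hβ hαβ
    refine ⟨fun i hik => ?_, fun i hik => ?_⟩
    · show ⟪c i, α • u + β • v'⟫ ≤ a i
      rw [inner_add_right, real_inner_smul_right, real_inner_smul_right]
      calc α * ⟪c i, u⟫ + β * ⟪c i, v'⟫
          ≤ α * a i + β * a i :=
            add_le_add (mul_le_mul_of_nonneg_left (hu.1 i hik) hα)
              (mul_le_mul_of_nonneg_left (hv'.1 i hik) hβ)
        _ = a i := by rw [← add_mul, hαβ, one_mul]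
    · show ⟪c i, α • u + β • v'⟫ = a i
      rw [inner_add_right, real_inner_smul_right, real_inner_smul_right,
        hu.2 i hik, hv'.2 i hik, ← add_mul, hαβ, one_mul]
  have hclosed : IsClosed Q := by
    have hQeq : Q = (⋂ i : Fin m, ⋂ _ : (i : ℕ) < k,
        {z : EuclideanSpace ℝ (Fin n) | ⟪c i, z⟫ ≤ a i}) ∩
        ⋂ i : Fin m, ⋂ _ : k ≤ (i : ℕ), {z : EuclideanSpace ℝ (Fin n) | ⟪c i, z⟫ = a i} := by
      ext z
      simp only [hQdef, Qset, Set.mem_inter_iff, Set.mem_iInter, Set.mem_setOf_eq]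
    rw [hQeq]
    apply IsClosed.inter
    · exact isClosed_iInter fun i => isClosed_iInter fun _ =>
        isClosed_le (Continuous.inner continuous_const continuous_id) continuous_const
    · exact isClosed_iInter fun i => isClosed_iInter fun _ =>
        isClosed_eq (Continuous.inner continuous_const continuous_id) continuous_const
  obtain ⟨y, hyQ, hdist⟩ := hclosed.exists_infDist_eq_dist hQne x
  have hproj : ∀ z ∈ Q, ⟪x - y, z - y⟫ ≤ 0 := by
    apply (norm_eq_iInf_iff_real_inner_le_zero hconv hyQ).mp
    rw [← dist_eq_norm, ← hdist, Metric.infDist_eq_iInf]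
    exact iInf_congr fun z => dist_eq_norm _ _
  set v := x - y with hv
  set t : Finset (Fin m ⊕ Fin m) := Finset.univ.filter
    (fun j => Sum.elim (fun i : Fin m => (((i : ℕ) < k ∧ ⟪c i, y⟫ = a i) ∨ k ≤ (i : ℕ)))
      (fun i : Fin m => k ≤ (i : ℕ)) j) with ht
  have hmem_inl : ∀ i : Fin m,
      Sum.inl i ∈ t ↔ (((i : ℕ) < k ∧ ⟪c i, y⟫ = a i) ∨ k ≤ (i : ℕ)) := by
    intro i; simp [ht]
  have hmem_inr : ∀ i : Fin m, Sum.inr i ∈ t ↔ k ≤ (i : ℕ) := by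
    intro i; simp [ht]
  have hfark : ∀ d, (∀ j ∈ t, 0 ≤ ⟪w j, d⟫) → 0 ≤ ⟪v, d⟫ := by
    intro d hd
    have heq0 : ∀ i : Fin m, k ≤ (i : ℕ) → ⟪c i, d⟫ = 0 := by
      intro i hki
      have h1 := hd (Sum.inl i) ((hmem_inl i).mpr (Or.inr hki))
      have h2 := hd (Sum.inr i) ((hmem_inr i).mpr hki)
      simp only [hw, Sum.elim_inl, Sum.elim_inr, inner_neg_left] at h1 h2
      linarith
    have hact : ∀ i : Fin m, (i : ℕ) < k → ⟪c i, y⟫ = a i → 0 ≤ ⟪c i, d⟫ := by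
      intro i hik hai
      have := hd (Sum.inl i) ((hmem_inl i).mpr (Or.inl ⟨hik, hai⟩))
      simpa [hw] using this
    set B : Finset (Fin m) := Finset.univ.filter
      (fun i => (i : ℕ) < k ∧ ⟪c i, y⟫ < a i) with hB
    set ε : ℝ := if hBne : B.Nonempty then
      min 1 (B.inf' hBne fun i => (a i - ⟪c i, y⟫) / (‖c i‖ * ‖d‖ + 1)) else 1 with hε
    have hεpos : 0 < ε := by
      rw [hε]
      split_ifs with hBne
      · refine lt_min one_pos ?_
        rw [Finset.lt_inf'_iff]
        intro i hiB
        have hgap : 0 < a i - ⟪c i, y⟫ := by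
          have := (Finset.mem_filter.mp hiB).2.2; linarith
        have hden : (0:ℝ) < ‖c i‖ * ‖d‖ + 1 := by positivity
        exact div_pos hgap hden
      · exact one_pos
    have hεle : ∀ i ∈ B, ε * (‖c i‖ * ‖d‖ + 1) ≤ a i - ⟪c i, y⟫ := by
      intro i hiB
      have hden : (0:ℝ) < ‖c i‖ * ‖d‖ + 1 := by positivity
      have h1 : ε ≤ (a i - ⟪c i, y⟫) / (‖c i‖ * ‖d‖ + 1) := by
        rw [hε]
        split_ifs with hBne
        · exact le_trans (min_le_right _ _) (Finset.inf'_le _ hiB)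
        · exact absurd ⟨i, hiB⟩ hBne
      calc ε * (‖c i‖ * ‖d‖ + 1)
          ≤ ((a i - ⟪c i, y⟫) / (‖c i‖ * ‖d‖ + 1)) * (‖c i‖ * ‖d‖ + 1) :=
            mul_le_mul_of_nonneg_right h1 hden.le
        _ = a i - ⟪c i, y⟫ := div_mul_cancel₀ _ hden.ne'
    have hzQ : y + ε • (-d) ∈ Q := by
      refine ⟨fun i hik => ?_, fun i hik => ?_⟩
      · show ⟪c i, y + ε • (-d)⟫ ≤ a i
        rw [inner_add_right, real_inner_smul_right, inner_neg_right]
        by_cases hai : ⟪c i, y⟫ = a i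
        · have hpos := hact i hik hai
          rw [hai]
          nlinarith [mul_nonneg hεpos.le hpos]
        · have hlt : ⟪c i, y⟫ < a i := lt_of_le_of_ne (hyQ.1 i hik) hai
          have hiB : i ∈ B := Finset.mem_filter.mpr ⟨Finset.mem_univ i, hik, hlt⟩
          have h2 := hεle i hiB
          have h3 : -⟪c i, d⟫ ≤ ‖c i‖ * ‖d‖ := by
            have := abs_real_inner_le_norm (c i) d
            have := neg_abs_le ⟪c i, d⟫
            linarith
          nlinarith [mul_le_mul_of_nonneg_left h3 hεpos.le]
      · show ⟪c i, y + ε • (-d)⟫ = a i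
        rw [inner_add_right, real_inner_smul_right, inner_neg_right, heq0 i hik,
          hyQ.2 i hik]
        ring
    have hp := hproj _ hzQ
    have hzy : y + ε • (-d) - y = ε • (-d) := by abel
    rw [hzy, real_inner_smul_right, inner_neg_right] at hp
    nlinarith [hεpos]
  obtain ⟨s, lam, hst, hlam0, hlamK, hrep⟩ := hkey t v hfark
  set ρ : Fin m ⊕ Fin m → ℝ := Sum.elim
    (fun i => if (i : ℕ) < k then max (⟪c i, x⟫ - a i) 0 else |⟪c i, x⟫ - a i|)
    (fun i => |⟪c i, x⟫ - a i|) with hρ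
  have hρnn : ∀ j, 0 ≤ ρ j := by
    intro j
    rcases j with i | i
    · simp only [hρ, Sum.elim_inl]
      split_ifs
      exacts [le_max_right _ _, abs_nonneg _]
    · simp only [hρ, Sum.elim_inr]
      exact abs_nonneg _
  have hres : ∀ j ∈ t, ⟪w j, v⟫ ≤ ρ j := by
    intro j hj
    rcases j with i | i
    · have hmem := (hmem_inl i).mp hj
      simp only [hw, Sum.elim_inl, hρ]
      rw [hv, inner_sub_right]
      rcases hmem with ⟨hik, hai⟩ | hki
      · rw [if_pos hik, hai]
        exact le_max_left _ _
      · rw [if_neg (not_lt.mpr hki), hyQ.2 i hki]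
        exact le_abs_self _
    · have hki := (hmem_inr i).mp hj
      simp only [hw, Sum.elim_inr, hρ, inner_neg_left]
      rw [hv, inner_sub_right, hyQ.2 i hki]
      exact neg_le_abs _
  have htsum : ∑ j ∈ t, ρ j ≤ S1 + 2 * S2 := by
    have hsub2 : t ⊆ Finset.univ.image Sum.inl ∪
        (Finset.univ.filter (fun i : Fin m => k ≤ (i : ℕ))).image Sum.inr := by
      intro j hj
      rcases j with i | i
      · exact Finset.mem_union_left _ (Finset.mem_image_of_mem _ (Finset.mem_univ i))
      · exact Finset.mem_union_right _ (Finset.mem_image_of_mem _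
          (Finset.mem_filter.mpr ⟨Finset.mem_univ i, (hmem_inr i).mp hj⟩))
    have hdisj : Disjoint (Finset.univ.image (Sum.inl : Fin m → Fin m ⊕ Fin m))
        ((Finset.univ.filter (fun i : Fin m => k ≤ (i : ℕ))).image Sum.inr) := by
      rw [Finset.disjoint_left]
      intro j hj1 hj2
      obtain ⟨i1, _, rfl⟩ := Finset.mem_image.mp hj1
      obtain ⟨i2, _, h⟩ := Finset.mem_image.mp hj2
      exact Sum.inl_ne_inr h.symm
    have hinl : ∑ j ∈ Finset.univ.image (Sum.inl : Fin m → Fin m ⊕ Fin m), ρ j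
        = S1 + S2 := by
      rw [Finset.sum_image (fun i _ j _ h => Sum.inl_injective h)]
      have : ∀ i : Fin m, ρ (Sum.inl i)
          = if (i : ℕ) < k then max (⟪c i, x⟫ - a i) 0 else |⟪c i, x⟫ - a i| := by
        intro i; simp [hρ]
      rw [Finset.sum_congr rfl (fun i _ => this i), Finset.sum_ite]
      congr 1
      apply Finset.sum_congr
      · apply Finset.filter_congr
        intro i _
        simp [not_lt]
      · intros; rfl
    have hinr : ∑ j ∈ (Finset.univ.filter (fun i : Fin m => k ≤ (i : ℕ))).image Sum.inr,
        ρ j = S2 := by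
      rw [Finset.sum_image (fun i _ j _ h => Sum.inr_injective h)]
      exact Finset.sum_congr rfl (fun i _ => by simp [hρ])
    calc ∑ j ∈ t, ρ j
        ≤ ∑ j ∈ (Finset.univ.image Sum.inl ∪
            (Finset.univ.filter (fun i : Fin m => k ≤ (i : ℕ))).image Sum.inr), ρ j :=
          Finset.sum_le_sum_of_subset_of_nonneg hsub2 (fun j _ _ => hρnn j)
      _ = (S1 + S2) + S2 := by rw [Finset.sum_union hdisj, hinl, hinr]
      _ ≤ S1 + 2 * S2 := by linarith
  have hnormsq : ‖v‖ * ‖v‖ ≤ (K * ‖v‖) * (S1 + 2 * S2) := by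
    have hstep : ‖v‖ * ‖v‖ = ∑ j ∈ s, lam j * ⟪w j, v⟫ := by
      rw [← real_inner_self_eq_norm_mul_norm,
        show ⟪v, v⟫ = ⟪∑ j ∈ s, lam j • w j, v⟫ from by rw [← hrep], sum_inner]
      exact Finset.sum_congr rfl fun j _ => real_inner_smul_left _ _ _
    calc ‖v‖ * ‖v‖ = ∑ j ∈ s, lam j * ⟪w j, v⟫ := hstep
      _ ≤ ∑ j ∈ s, lam j * ρ j :=
          Finset.sum_le_sum fun j hj =>
            mul_le_mul_of_nonneg_left (hres j (hst hj)) (hlam0 j hj)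
      _ ≤ ∑ j ∈ s, (K * ‖v‖) * ρ j :=
          Finset.sum_le_sum fun j hj =>
            mul_le_mul_of_nonneg_right (hlamK j hj) (hρnn j)
      _ = (K * ‖v‖) * ∑ j ∈ s, ρ j := by rw [Finset.mul_sum]
      _ ≤ (K * ‖v‖) * ∑ j ∈ t, ρ j :=
          mul_le_mul_of_nonneg_left
            (Finset.sum_le_sum_of_subset_of_nonneg hst fun j _ _ => hρnn j)
            (by positivity)
      _ ≤ (K * ‖v‖) * (S1 + 2 * S2) :=
          mul_le_mul_of_nonneg_left htsum (by positivity)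
  have hfinal : ‖v‖ ≤ 2 * K * (S1 + S2) := by
    rcases eq_or_lt_of_le (norm_nonneg v) with h0 | h0
    · rw [← h0]; positivity
    · have h1 : ‖v‖ * ‖v‖ ≤ (2 * K * (S1 + S2)) * ‖v‖ := by
        nlinarith [mul_nonneg (mul_nonneg hK.le (norm_nonneg v)) hS2,
          mul_nonneg (mul_nonneg hK.le (norm_nonneg v)) hS1]
      exact le_of_mul_le_mul_right h1 h0
  rw [hdist, dist_eq_norm, ← hv]
  exact hfinal
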